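/- Let k be a positive integer and let λ ∈ ℂ not be a positive integer. Then Σ_{m=1}^∞ 1/( m^k (m−λ) ) = Σ_{m_1>m_2>⋯>m_k≥1} 1/( m_1 (m_1−λ)(m_2−λ)⋯(m_k−λ) ); that is, the reduced Ohno relation F(k;λ) = G(k;λ) for the depth-one index (k) holds, which is the generating-function form of the sum formula of depth k. -/

import Mathlib

/-- Strictly decreasing tuples `m 0 > m 1 > ⋯ > m (N-1) ≥ 1` of positive integers,
padded by `0` from position `N` on. -/
def DecTuple (N : ℕ) : Set (ℕ → ℕ) :=
  {m | (∀ j, j + 1 < N → m (j + 1) < m j) ∧ (∀ j, j < N → 1 ≤ m j) ∧ ∀ j, N ≤ j → m j = 0}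

open Finset Filter Topology

namespace ReducedOhno

noncomputable def dR (n : ℕ) : ℝ := ∏ i ∈ Finset.range n, (i + 1 : ℝ)

lemma dR_pos (n : ℕ) : 0 < dR n := Finset.prod_pos (fun i _ => by positivity)

noncomputable def cR (m n : ℕ) : ℝ := dR m * dR n / dR (m + n)

lemma cR_pos (m n : ℕ) : 0 < cR m n :=
  div_pos (mul_pos (dR_pos m) (dR_pos n)) (dR_pos (m + n))

lemma cR_comm (m n : ℕ) : cR m n = cR n m := by
  unfold cR; rw [Nat.add_comm n m]; ring

lemma dR_add (m n : ℕ) : dR (m + n) = dR m * ∏ i ∈ Finset.range n, (m + i + 1 : ℝ) := by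
  unfold dR
  rw [Finset.prod_range_add]
  congr 1
  apply Finset.prod_congr rfl
  intro i _
  push_cast
  ring

lemma cR_eq_prod (m n : ℕ) : cR m n = ∏ i ∈ Finset.range n, ((i + 1 : ℝ) / (m + i + 1)) := by
  unfold cR
  rw [dR_add, mul_div_mul_left _ _ (ne_of_gt (dR_pos m))]
  show (∏ i ∈ Finset.range n, ((i:ℝ) + 1)) / _ = _
  rw [← Finset.prod_div_distrib]

lemma cR_zero_right (m : ℕ) : cR m 0 = 1 := by
  rw [cR_eq_prod]; simp

lemma cR_le_one (m n : ℕ) : cR m n ≤ 1 := by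
  rw [cR_eq_prod]
  apply Finset.prod_le_one
  · intro i _; positivity
  · intro i _
    rw [div_le_one (by positivity)]
    have : (0:ℝ) ≤ m := Nat.cast_nonneg m
    linarith

lemma cR_le (m n : ℕ) (hm : 1 ≤ m) : cR m n ≤ 1 / (n + 1) := by
  rw [cR_comm, cR_eq_prod]
  obtain ⟨m', rfl⟩ : ∃ m', m = m' + 1 := ⟨m - 1, by omega⟩
  rw [Finset.prod_range_succ']
  push_cast
  have hn : (0:ℝ) ≤ n := Nat.cast_nonneg n
  have hle : (∏ k ∈ Finset.range m', (((k:ℝ) + 1 + 1) / ((n:ℝ) + ((k:ℝ) + 1) + 1))) ≤ 1 := by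
    apply Finset.prod_le_one
    · intro i _; positivity
    · intro i _
      rw [div_le_one (by positivity)]
      linarith
  calc (∏ k ∈ Finset.range m', (((k:ℝ) + 1 + 1) / ((n:ℝ) + ((k:ℝ) + 1) + 1))) * ((0 + 1) / ((n:ℝ) + 0 + 1))
      ≤ 1 * ((0 + 1) / ((n:ℝ) + 0 + 1)) := by
        apply mul_le_mul_of_nonneg_right hle (by positivity)
    _ = 1 / ((n:ℝ) + 1) := by norm_num

lemma cR_succ (m n : ℕ) : cR m (n + 1) = cR m n * ((n + 1 : ℝ) / (m + n + 1)) := by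
  rw [cR_eq_prod, cR_eq_prod, Finset.prod_range_succ]

lemma tele_cR {m : ℕ} (hm : 1 ≤ m) (n : ℕ) :
    cR m n / m - cR m (n + 1) / m = cR m (n + 1) / (n + 1) := by
  have h1 : cR m n = cR m (n + 1) * ((m + n + 1 : ℝ) / (n + 1)) := by
    rw [cR_succ]
    have h2 : (m + n + 1 : ℝ) ≠ 0 := by positivity
    have h3 : ((n:ℝ) + 1) ≠ 0 := by positivity
    field_simp
  rw [h1]
  have hm0 : (0:ℝ) < m := by exact_mod_cast hm
  have h3 : ((n:ℝ) + 1) ≠ 0 := by positivity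
  field_simp
  ring

/-- Telescoping sum for the classical connector. -/
lemma hasSum_cR {m : ℕ} (hm : 1 ≤ m) (r : ℕ) :
    HasSum (fun b : ℕ => cR m (r + b + 1) / (r + b + 1)) (cR m r / m) := by
  set f : ℕ → ℝ := fun b => cR m (r + b + 1) / (r + b + 1) with hf
  set a : ℕ → ℝ := fun b => cR m (r + b) / m with ha
  have hdiff : ∀ b, f b = a b - a (b + 1) := by
    intro b
    have h := tele_cR hm (r + b)
    push_cast at h
    simp only [ha, hf]
    rw [show r + (b + 1) = (r + b) + 1 by ring]
    push_cast
    linarith [h]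
  have hpartial : ∀ N, ∑ b ∈ Finset.range N, f b = a 0 - a N := by
    intro N
    calc ∑ b ∈ Finset.range N, f b = ∑ b ∈ Finset.range N, (a b - a (b + 1)) :=
          Finset.sum_congr rfl (fun b _ => hdiff b)
      _ = a 0 - a N := Finset.sum_range_sub' a N
  have hanonneg : ∀ N, 0 ≤ a N := fun N => by
    have := (cR_pos m (r + N)).le
    have hm0 : (0:ℝ) ≤ m := Nat.cast_nonneg m
    simp only [ha]
    positivity
  have hsummable : Summable f := by
    apply summable_of_sum_range_le (c := a 0)
    · intro b
      have h1 := (cR_pos m (r + b + 1)).le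
      simp only [hf]
      positivity
    · intro N; rw [hpartial N]; linarith [hanonneg N]
  have haN : Tendsto a atTop (𝓝 0) := by
    refine squeeze_zero hanonneg (g := fun (N : ℕ) => (1 / ((N : ℝ) + 1)) / m) (fun N => ?_) ?_
    · simp only [ha]
      have hm0 : (0:ℝ) < m := by exact_mod_cast hm
      have h4 : cR m (r + N) ≤ 1 / ((N:ℝ) + 1) :=
        calc cR m (r + N) ≤ 1 / ((r + N : ℕ) + 1) := cR_le m (r + N) hm
          _ ≤ 1 / ((N:ℝ) + 1) := by
              apply one_div_le_one_div_of_le (by positivity)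
              push_cast
              have : (0:ℝ) ≤ r := Nat.cast_nonneg r
              linarith
      gcongr
    · rw [show (0:ℝ) = 0 / m by simp]
      exact (tendsto_one_div_add_atTop_nhds_zero_nat).div_const (m : ℝ)
  rw [hsummable.hasSum_iff_tendsto_nat]
  have h2 : Tendsto (fun N => a 0 - a N) atTop (𝓝 (a 0 - 0)) := tendsto_const_nhds.sub haN
  have h3 : a 0 = cR m r / m := by simp [ha]
  rw [sub_zero, h3] at h2
  convert h2 using 1
  funext N; exact hpartial N

/-! ### Gap coordinates -/

def gext {j : ℕ} (g : Fin j → ℕ) (u : ℕ) : ℕ := if h : u < j then g ⟨u, h⟩ else 0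

/-- chain value after `t` steps starting from `0` offset: `v t = t + g₀ + ⋯ + g_{t-1}`. -/
def sfun {j : ℕ} (g : Fin j → ℕ) (t : ℕ) : ℕ := t + ∑ u ∈ Finset.range t, gext g u

@[simp] lemma sfun_zero {j : ℕ} (g : Fin j → ℕ) : sfun g 0 = 0 := by simp [sfun]

lemma sfun_succ {j : ℕ} (g : Fin j → ℕ) (t : ℕ) :
    sfun g (t + 1) = sfun g t + gext g t + 1 := by
  simp [sfun, Finset.sum_range_succ]; ring

lemma sfun_le (j : ℕ) (g : Fin j → ℕ) (t : ℕ) : t ≤ sfun g t := Nat.le_add_right _ _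

lemma sfun_lt {j : ℕ} (g : Fin j → ℕ) {t t' : ℕ} (h : t < t') : sfun g t < sfun g t' := by
  induction t' with
  | zero => omega
  | succ t'' ih =>
    rw [sfun_succ]
    rcases Nat.lt_succ_iff_lt_or_eq.mp h with h' | h'
    · have := ih h'; omega
    · subst h'; omega

lemma gext_tail {j : ℕ} (g : Fin (j + 1) → ℕ) (u : ℕ) :
    gext g (u + 1) = gext (Fin.tail g) u := by
  unfold gext
  by_cases h : u < j
  · rw [dif_pos (by omega : u + 1 < j + 1), dif_pos h]
    simp [Fin.tail]
  · rw [dif_neg (by omega), dif_neg h]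

lemma gext_zero {j : ℕ} (g : Fin (j + 1) → ℕ) : gext g 0 = g 0 := by
  unfold gext
  rw [dif_pos (Nat.succ_pos j)]
  rfl

lemma sfun_tail {j : ℕ} (g : Fin (j + 1) → ℕ) (t : ℕ) :
    sfun g (t + 1) = g 0 + 1 + sfun (Fin.tail g) t := by
  unfold sfun
  rw [Finset.sum_range_succ']
  simp only [gext_tail g, gext_zero g]
  ring


/-! ### Real majorant tuple system -/

noncomputable def QS (M σ : ℕ) (j : ℕ) (r : ℕ) (g : Fin j → ℕ) : ℝ :=
  (∏ t ∈ Finset.range j, (1 / ((r + sfun g (t + 1) : ℕ) : ℝ))) * cR M (r + sfun g j + σ)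

lemma QS_nonneg (M σ j r : ℕ) (g : Fin j → ℕ) : 0 ≤ QS M σ j r g := by
  unfold QS
  have h := (cR_pos M (r + sfun g j + σ)).le
  positivity

lemma QS_succ (M σ j r : ℕ) (g : Fin (j + 1) → ℕ) :
    QS M σ (j + 1) r g
      = (1 / ((r + g 0 + 1 : ℕ) : ℝ)) * QS M σ j (r + g 0 + 1) (Fin.tail g) := by
  unfold QS
  rw [Finset.prod_range_succ']
  have h1 : ∀ t, r + sfun g (t + 1 + 1) = (r + g 0 + 1) + sfun (Fin.tail g) (t + 1) := by
    intro t; rw [sfun_tail]; ring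
  have h0 : r + sfun g (0 + 1) = r + g 0 + 1 := by
    rw [sfun_tail]; simp; omega
  have htop : r + sfun g (j + 1) + σ = (r + g 0 + 1) + sfun (Fin.tail g) j + σ := by
    rw [sfun_tail]; ring
  rw [htop, h0]
  rw [Finset.prod_congr rfl (fun t _ => by rw [h1 t])]
  ring

lemma QS_main (M σ : ℕ) (hM : 1 ≤ M) (j : ℕ) :
    ∀ r, Summable (QS M σ j r) ∧
      ∑' g, QS M σ j r g ≤ (σ + 1) ^ j * cR M (r + σ) / M ^ j := by
  induction j with
  | zero =>
    intro r
    haveI : Unique (Fin 0 → ℕ) := ⟨⟨fun i => i.elim0⟩, fun g => funext fun i => i.elim0⟩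
    have hval : QS M σ 0 r default = cR M (r + σ) := by
      unfold QS; simp
    have hs : HasSum (QS M σ 0 r) (cR M (r + σ)) := by
      rw [← hval]
      exact hasSum_single default (fun b hb => absurd (Subsingleton.elim b default) hb)
    refine ⟨hs.summable, ?_⟩
    rw [hs.tsum_eq]
    simp
  | succ j ih =>
    intro r
    set e := (Fin.consEquiv (fun _ : Fin (j + 1) => ℕ)).symm with he
    set F : ℕ × (Fin j → ℕ) → ℝ := fun p => QS M σ (j + 1) r (e.symm p) with hF
    have hcomp : ∀ b t, F (b, t)
        = (1 / ((r + b + 1 : ℕ) : ℝ)) * QS M σ j (r + b + 1) t := by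
      intro b t
      have h1 : e.symm (b, t) = Fin.cons b t := by simp [he]; rfl
      simp only [hF, h1, QS_succ]
      simp [Fin.cons_zero, Fin.tail_cons]
    have hFnonneg : ∀ p, 0 ≤ F p := fun p => QS_nonneg _ _ _ _ _
    have hslice : ∀ b : ℕ, Summable (fun t => F (b, t)) := by
      intro b
      have := ((ih (r + b + 1)).1).mul_left (1 / ((r + b + 1 : ℕ) : ℝ))
      exact this.congr (fun t => (hcomp b t).symm)
    have hsliceSum : ∀ b : ℕ, ∑' t, F (b, t)
        = (1 / ((r + b + 1 : ℕ) : ℝ)) * ∑' t, QS M σ j (r + b + 1) t := by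
      intro b
      rw [tsum_congr (fun t => hcomp b t), tsum_mul_left]
    -- majorant for slice sums
    set u : ℕ → ℝ := fun b => ((σ + 1) ^ (j + 1) / (M : ℝ) ^ j)
        * (cR M ((r + σ) + b + 1) / ((r + σ) + b + 1)) with hu
    have hub : ∀ b, ∑' t, F (b, t) ≤ u b := by
      intro b
      rw [hsliceSum b]
      have h2 := (ih (r + b + 1)).2
      have hvpos : (0:ℝ) < ((r + b + 1 : ℕ) : ℝ) := by positivity
      have h3 : (1 / ((r + b + 1 : ℕ) : ℝ)) * (∑' t, QS M σ j (r + b + 1) t)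
          ≤ (1 / ((r + b + 1 : ℕ) : ℝ)) * ((σ + 1) ^ j * cR M ((r + b + 1) + σ) / M ^ j) := by
        apply mul_le_mul_of_nonneg_left h2 (by positivity)
      refine h3.trans ?_
      have hcongr : (r + b + 1) + σ = (r + σ) + b + 1 := by ring
      rw [hcongr]
      have hMpos : (0:ℝ) < (M:ℝ) ^ j := by
        have : (0:ℝ) < M := by exact_mod_cast hM
        positivity
      have hcRpos := (cR_pos M ((r + σ) + b + 1)).le
      -- key: 1/(r+b+1) ≤ (σ+1)/((r+σ)+b+1)
      have hkey : (1 / ((r + b + 1 : ℕ) : ℝ)) ≤ (σ + 1) / (((r + σ) + b + 1 : ℕ) : ℝ) := by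
        rw [div_le_div_iff₀ hvpos (by positivity)]
        push_cast
        have hσ : (0:ℝ) ≤ σ := Nat.cast_nonneg σ
        have hr : (0:ℝ) ≤ r := Nat.cast_nonneg r
        have hb : (0:ℝ) ≤ b := Nat.cast_nonneg b
        nlinarith
      have hfactor : (0:ℝ) ≤ ((σ:ℝ) + 1) ^ j * cR M ((r + σ) + b + 1) / (M:ℝ) ^ j := by
        positivity
      calc (1 / ((r + b + 1 : ℕ) : ℝ)) * (((σ:ℝ) + 1) ^ j * cR M ((r + σ) + b + 1) / (M:ℝ) ^ j)
          ≤ (((σ:ℝ) + 1) / (((r + σ) + b + 1 : ℕ) : ℝ))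
              * (((σ:ℝ) + 1) ^ j * cR M ((r + σ) + b + 1) / (M:ℝ) ^ j) :=
            mul_le_mul_of_nonneg_right hkey hfactor
        _ = u b := by simp only [hu]; push_cast; ring
    have husum : Summable u := by
      have h6 := ((hasSum_cR hM (r + σ)).summable).mul_left (((σ:ℝ) + 1) ^ (j + 1) / (M:ℝ) ^ j)
      refine h6.congr (fun b => ?_)
      simp only [hu]
      push_cast
      ring
    have htb : Summable (fun b => ∑' t, F (b, t)) :=
      Summable.of_nonneg_of_le (fun b => tsum_nonneg (fun t => hFnonneg _)) hub husum
    have hFsum : Summable F := by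
      rw [summable_prod_of_nonneg hFnonneg]
      exact ⟨hslice, htb⟩
    have hQsum : Summable (QS M σ (j + 1) r) := by
      rw [← Equiv.summable_iff e.symm]
      exact hFsum
    refine ⟨hQsum, ?_⟩
    have h5 : ∑' g, QS M σ (j + 1) r g = ∑' p, F p := (Equiv.tsum_eq e.symm _).symm
    rw [h5, Summable.tsum_prod' hFsum hslice]
    calc ∑' b, ∑' t, F (b, t) ≤ ∑' b, u b := Summable.tsum_le_tsum hub htb husum
      _ = (((σ:ℝ) + 1) ^ (j + 1) / (M:ℝ) ^ j) * (cR M (r + σ) / M) := by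
          rw [hu, tsum_mul_left]
          congr 1
          rw [← (hasSum_cR hM (r + σ)).tsum_eq]
          apply tsum_congr
          intro b
          push_cast
          ring
      _ = ((σ:ℝ) + 1) ^ (j + 1) * cR M (r + σ) / (M:ℝ) ^ (j + 1) := by
          rw [pow_succ]; ring

/-! ### Complex connector -/

noncomputable def dd (lam : ℂ) (n : ℕ) : ℂ := ∏ i ∈ Finset.range n, (((i + 1 : ℕ) : ℂ) - lam)

noncomputable def cc (lam : ℂ) (m n : ℕ) : ℂ := dd lam m * dd lam n / dd lam (m + n)

variable {lam : ℂ}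

lemma fact_ne (hlam : ∀ p : ℕ, 0 < p → lam ≠ (p : ℂ)) {n : ℕ} (hn : 1 ≤ n) :
    ((n : ℕ) : ℂ) - lam ≠ 0 :=
  sub_ne_zero_of_ne (fun h => hlam n hn h.symm)

lemma dd_ne (hlam : ∀ p : ℕ, 0 < p → lam ≠ (p : ℂ)) (n : ℕ) : dd lam n ≠ 0 := by
  unfold dd
  rw [Finset.prod_ne_zero_iff]
  intro i _
  exact fact_ne hlam (Nat.le_add_left 1 i)

lemma cc_comm (m n : ℕ) : cc lam m n = cc lam n m := by
  unfold cc; rw [Nat.add_comm n m]; ring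

lemma cc_zero_right (hlam : ∀ p : ℕ, 0 < p → lam ≠ (p : ℂ)) (m : ℕ) : cc lam m 0 = 1 := by
  unfold cc dd
  simp only [Finset.range_zero, Finset.prod_empty, Nat.add_zero, mul_one]
  exact div_self (dd_ne hlam m)

lemma dd_add (lam : ℂ) (m n : ℕ) :
    dd lam (m + n) = dd lam m * ∏ i ∈ Finset.range n, (((m + i + 1 : ℕ) : ℂ) - lam) := by
  unfold dd
  rw [Finset.prod_range_add]

lemma cc_eq_prod (hlam : ∀ p : ℕ, 0 < p → lam ≠ (p : ℂ)) (m n : ℕ) :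
    cc lam m n = ∏ i ∈ Finset.range n,
      ((((i + 1 : ℕ) : ℂ) - lam) / (((m + i + 1 : ℕ) : ℂ) - lam)) := by
  unfold cc
  rw [dd_add, mul_div_mul_left _ _ (dd_ne hlam m)]
  show (∏ i ∈ Finset.range n, (((i + 1 : ℕ) : ℂ) - lam)) / _ = _
  rw [← Finset.prod_div_distrib]

lemma cc_succ (hlam : ∀ p : ℕ, 0 < p → lam ≠ (p : ℂ)) (m n : ℕ) :
    cc lam m (n + 1) * (((m + n + 1 : ℕ) : ℂ) - lam)
      = cc lam m n * (((n + 1 : ℕ) : ℂ) - lam) := by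
  unfold cc
  have h1 : dd lam (n + 1) = dd lam n * (((n + 1 : ℕ) : ℂ) - lam) := Finset.prod_range_succ _ n
  have h2 : dd lam (m + (n + 1)) = dd lam (m + n) * (((m + n + 1 : ℕ) : ℂ) - lam) := by
    rw [show m + (n + 1) = (m + n) + 1 by ring]
    exact Finset.prod_range_succ _ (m + n)
  rw [h1, h2]
  have hY : (((m + n + 1 : ℕ) : ℂ) - lam) ≠ 0 := fact_ne hlam (by omega)
  rw [div_mul_eq_mul_div,
    show dd lam m * (dd lam n * (((n + 1 : ℕ) : ℂ) - lam)) * (((m + n + 1 : ℕ) : ℂ) - lam)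
      = (dd lam m * dd lam n * (((n + 1 : ℕ) : ℂ) - lam)) * (((m + n + 1 : ℕ) : ℂ) - lam) by ring,
    mul_div_mul_right _ _ hY, div_mul_eq_mul_div]


noncomputable def Am (lam : ℂ) (c0 : ℝ) (m : ℕ) : ℝ :=
  ∏ i ∈ Finset.range m, ‖(((i + 1 : ℕ) : ℂ) - lam)‖ / (c0 * (i + 1))

lemma Am_nonneg {c0 : ℝ} (hc0 : 0 < c0) (m : ℕ) : 0 ≤ Am lam c0 m :=
  Finset.prod_nonneg (fun i _ => by positivity)

lemma ncc_le (hlam : ∀ p : ℕ, 0 < p → lam ≠ (p : ℂ)) {c0 : ℝ} (hc0 : 0 < c0)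
    (hc0b : ∀ n : ℕ, 1 ≤ n → c0 * n ≤ ‖((n : ℕ) : ℂ) - lam‖) (m n : ℕ) :
    ‖cc lam m n‖ ≤ Am lam c0 m * cR m n := by
  rw [cc_comm, cc_eq_prod hlam n m, norm_prod]
  have step1 : ∀ i ∈ Finset.range m,
      ‖(((i + 1 : ℕ) : ℂ) - lam) / (((n + i + 1 : ℕ) : ℂ) - lam)‖
        ≤ ‖(((i + 1 : ℕ) : ℂ) - lam)‖ / (c0 * ((n + i + 1 : ℕ) : ℝ)) := by
    intro i _
    rw [norm_div]
    apply div_le_div_of_nonneg_left (norm_nonneg _) (by positivity)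
    exact hc0b (n + i + 1) (by omega)
  refine (Finset.prod_le_prod (fun i _ => norm_nonneg _) step1).trans ?_
  rw [show Am lam c0 m * cR m n
      = ∏ i ∈ Finset.range m,
        (‖(((i + 1 : ℕ) : ℂ) - lam)‖ / (c0 * (i + 1)) * ((i + 1 : ℝ) / (n + i + 1))) by
    rw [Finset.prod_mul_distrib]; rw [cR_comm, cR_eq_prod]; rfl]
  apply le_of_eq
  apply Finset.prod_congr rfl
  intro i _
  have h1 : (0:ℝ) < (i:ℝ) + 1 := by positivity
  have h2 : (0:ℝ) < (n:ℝ) + (i:ℝ) + 1 := by positivity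
  push_cast
  field_simp

lemma tele_cc (hlam : ∀ p : ℕ, 0 < p → lam ≠ (p : ℂ)) {m : ℕ} (hm : 1 ≤ m) (n : ℕ) :
    cc lam m n / m - cc lam m (n + 1) / m
      = (((n + 1 : ℕ) : ℂ) - lam)⁻¹ * cc lam m (n + 1) := by
  have hX : (((n + 1 : ℕ) : ℂ) - lam) ≠ 0 := fact_ne hlam (by omega)
  have hmC : ((m : ℕ) : ℂ) ≠ 0 := Nat.cast_ne_zero.mpr (by omega)
  have h := cc_succ hlam m n
  push_cast at h
  have key : (cc lam m n - cc lam m (n + 1)) * (((n + 1 : ℕ) : ℂ) - lam)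
      = (m : ℂ) * cc lam m (n + 1) := by
    push_cast
    linear_combination -h
  rw [div_sub_div_same, div_eq_iff hmC, inv_mul_eq_div, div_mul_eq_mul_div, eq_comm,
    div_eq_iff hX]
  linear_combination (-1 : ℂ) * key

/-- Complex telescoping sum. -/
lemma hasSum_cc (hlam : ∀ p : ℕ, 0 < p → lam ≠ (p : ℂ)) {c0 : ℝ} (hc0 : 0 < c0)
    (hc0b : ∀ n : ℕ, 1 ≤ n → c0 * n ≤ ‖((n : ℕ) : ℂ) - lam‖)
    {m : ℕ} (hm : 1 ≤ m) (r : ℕ) :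
    HasSum (fun b : ℕ => (((r + b + 1 : ℕ) : ℂ) - lam)⁻¹ * cc lam m (r + b + 1))
      (cc lam m r / m) := by
  set f : ℕ → ℂ := fun b => (((r + b + 1 : ℕ) : ℂ) - lam)⁻¹ * cc lam m (r + b + 1) with hf
  set a : ℕ → ℂ := fun b => cc lam m (r + b) / m with ha
  have hnorm : ∀ b, ‖f b‖ ≤ (Am lam c0 m / c0) * (cR m (r + b + 1) / (r + b + 1)) := by
    intro b
    simp only [hf]
    rw [norm_mul, norm_inv]
    have h1 : ‖cc lam m (r + b + 1)‖ ≤ Am lam c0 m * cR m (r + b + 1) := ncc_le hlam hc0 hc0b m _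
    have h2 : c0 * ((r + b + 1 : ℕ) : ℝ) ≤ ‖(((r + b + 1 : ℕ) : ℂ)) - lam‖ :=
      hc0b _ (by omega)
    have h3 : ‖(((r + b + 1 : ℕ) : ℂ)) - lam‖⁻¹ ≤ (c0 * ((r + b + 1 : ℕ) : ℝ))⁻¹ := by
      apply inv_anti₀ (by positivity) h2
    calc ‖(((r + b + 1 : ℕ) : ℂ)) - lam‖⁻¹ * ‖cc lam m (r + b + 1)‖
        ≤ (c0 * ((r + b + 1 : ℕ) : ℝ))⁻¹ * (Am lam c0 m * cR m (r + b + 1)) := by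
          apply mul_le_mul h3 h1 (norm_nonneg _) (by positivity)
      _ = (Am lam c0 m / c0) * (cR m (r + b + 1) / (r + b + 1)) := by
          push_cast
          field_simp
  have hsummable : Summable f :=
    Summable.of_norm_bounded ((hasSum_cR hm r).summable.mul_left (Am lam c0 m / c0)) hnorm
  have hdiff : ∀ b, f b = a b - a (b + 1) := by
    intro b
    have h := tele_cc hlam hm (r + b)
    simp only [ha, hf]
    rw [show r + (b + 1) = (r + b) + 1 by ring, h]
  have hpartial : ∀ N, ∑ b ∈ Finset.range N, f b = a 0 - a N := by
    intro N
    calc ∑ b ∈ Finset.range N, f b = ∑ b ∈ Finset.range N, (a b - a (b + 1)) :=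
          Finset.sum_congr rfl (fun b _ => hdiff b)
      _ = a 0 - a N := Finset.sum_range_sub' a N
  have haN : Tendsto a atTop (𝓝 0) := by
    apply squeeze_zero_norm (a := fun (N : ℕ) => Am lam c0 m * (1 / ((N : ℝ) + 1)))
    · intro N
      simp only [ha]
      rw [norm_div]
      have hm1 : (1:ℝ) ≤ ‖((m : ℕ) : ℂ)‖ := by
        rw [Complex.norm_natCast]
        exact_mod_cast hm
      have h4 : ‖cc lam m (r + N)‖ ≤ Am lam c0 m * (1 / ((N : ℝ) + 1)) := by
        refine (ncc_le hlam hc0 hc0b m (r + N)).trans ?_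
        apply mul_le_mul_of_nonneg_left _ (Am_nonneg hc0 m)
        calc cR m (r + N) ≤ 1 / ((r + N : ℕ) + 1) := cR_le m (r + N) hm
          _ ≤ 1 / ((N : ℝ) + 1) := by
              apply one_div_le_one_div_of_le (by positivity)
              push_cast
              have : (0:ℝ) ≤ r := Nat.cast_nonneg r
              linarith
      calc ‖cc lam m (r + N)‖ / ‖((m : ℕ) : ℂ)‖ ≤ ‖cc lam m (r + N)‖ / 1 := by
            apply div_le_div_of_nonneg_left (norm_nonneg _) one_pos hm1
        _ = ‖cc lam m (r + N)‖ := by rw [div_one]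
        _ ≤ Am lam c0 m * (1 / ((N : ℝ) + 1)) := h4
    · rw [show (0:ℝ) = Am lam c0 m * 0 by ring]
      exact tendsto_one_div_add_atTop_nhds_zero_nat.const_mul _
  rw [hsummable.hasSum_iff_tendsto_nat]
  have h2 : Tendsto (fun N => a 0 - a N) atTop (𝓝 (a 0 - 0)) := tendsto_const_nhds.sub haN
  have h3 : a 0 = cc lam m r / m := by simp [ha]
  rw [sub_zero, h3] at h2
  convert h2 using 1
  funext N; exact hpartial N


lemma ncc_tail (hlam : ∀ p : ℕ, 0 < p → lam ≠ (p : ℂ)) {s : ℕ} (hsb : ‖lam‖ ≤ s)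
    {m : ℕ} (hm : 2 * s + 1 ≤ m) (n : ℕ) :
    ‖cc lam m n‖ * cR (m - 2 * s) s ≤ cR (m - 2 * s) (s + n) := by
  have hcast : ((m - 2 * s : ℕ) : ℝ) = (m : ℝ) - 2 * s := by
    push_cast [Nat.cast_sub (by omega : 2 * s ≤ m)]
    ring
  have hsplit : cR (m - 2 * s) (s + n)
      = cR (m - 2 * s) s * ∏ i ∈ Finset.range n, (((s + i : ℕ) + 1 : ℝ) / ((m - 2 * s : ℕ) + ((s + i : ℕ) : ℝ) + 1)) := by
    rw [cR_eq_prod, cR_eq_prod, Finset.prod_range_add]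
  rw [hsplit, mul_comm (cR (m - 2 * s) s)]
  have hcR0 : (0:ℝ) ≤ cR (m - 2 * s) s := (cR_pos _ _).le
  apply mul_le_mul_of_nonneg_right _ hcR0
  rw [cc_eq_prod hlam m n, norm_prod]
  apply Finset.prod_le_prod (fun i _ => norm_nonneg _)
  intro i _
  rw [norm_div]
  have hnum : ‖(((i + 1 : ℕ) : ℂ) - lam)‖ ≤ ((s + i : ℕ) : ℝ) + 1 := by
    refine (norm_sub_le _ _).trans ?_
    rw [Complex.norm_natCast]
    push_cast
    linarith
  have hden : ((m - 2 * s : ℕ) : ℝ) + ((s + i : ℕ) : ℝ) + 1 ≤ ‖(((m + i + 1 : ℕ) : ℂ) - lam)‖ := by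
    refine le_trans ?_ (norm_sub_norm_le _ _)
    rw [Complex.norm_natCast]
    rw [hcast]
    push_cast
    linarith
  have hdenpos : (0:ℝ) < ((m - 2 * s : ℕ) : ℝ) + ((s + i : ℕ) : ℝ) + 1 := by positivity
  exact div_le_div₀ (by positivity) hnum hdenpos hden

/-! ### Complex tuple system -/

noncomputable def Praw (lam : ℂ) (j r : ℕ) (g : Fin j → ℕ) : ℂ :=
  ∏ t ∈ Finset.range j, (((r + sfun g (t + 1) : ℕ) : ℂ) - lam)⁻¹

noncomputable def PP (lam : ℂ) (m j r : ℕ) (g : Fin j → ℕ) : ℂ :=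
  Praw lam j r g * cc lam m (r + sfun g j)

lemma PP_succ (lam : ℂ) (m j r : ℕ) (g : Fin (j + 1) → ℕ) :
    PP lam m (j + 1) r g
      = (((r + g 0 + 1 : ℕ) : ℂ) - lam)⁻¹ * PP lam m j (r + g 0 + 1) (Fin.tail g) := by
  unfold PP Praw
  rw [Finset.prod_range_succ']
  have h1 : ∀ t, r + sfun g (t + 1 + 1) = (r + g 0 + 1) + sfun (Fin.tail g) (t + 1) := by
    intro t; rw [sfun_tail]; ring
  have h0 : r + sfun g (0 + 1) = r + g 0 + 1 := by
    rw [sfun_tail]; simp; omega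
  have htop : r + sfun g (j + 1) = (r + g 0 + 1) + sfun (Fin.tail g) j := by
    rw [sfun_tail]; ring
  rw [htop, h0]
  rw [Finset.prod_congr rfl (fun t _ => by rw [h1 t])]
  ring

/-- pointwise norm bound via the `σ = 0` real system -/
lemma PP_le (hlam : ∀ p : ℕ, 0 < p → lam ≠ (p : ℂ)) {c0 : ℝ} (hc0 : 0 < c0)
    (hc0b : ∀ n : ℕ, 1 ≤ n → c0 * n ≤ ‖((n : ℕ) : ℂ) - lam‖)
    (m j r : ℕ) (g : Fin j → ℕ) :
    ‖PP lam m j r g‖ ≤ (Am lam c0 m / c0 ^ j) * QS m 0 j r g := by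
  unfold PP QS Praw
  rw [norm_mul, norm_prod]
  have h1 : ∀ t ∈ Finset.range j,
      ‖(((r + sfun g (t + 1) : ℕ) : ℂ) - lam)⁻¹‖
        ≤ (1 / c0) * (1 / ((r + sfun g (t + 1) : ℕ) : ℝ)) := by
    intro t _
    rw [norm_inv]
    have hv : 1 ≤ r + sfun g (t + 1) := by
      have := sfun_le j g (t + 1); omega
    have h2 := hc0b _ hv
    have h3 : (0:ℝ) < c0 * ((r + sfun g (t + 1) : ℕ) : ℝ) := by
      have : (0:ℝ) < ((r + sfun g (t + 1) : ℕ) : ℝ) := by exact_mod_cast hv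
      positivity
    refine (inv_anti₀ h3 h2).trans_eq ?_
    rw [mul_inv]
    ring
  have hprod : (∏ t ∈ Finset.range j, ‖(((r + sfun g (t + 1) : ℕ) : ℂ) - lam)⁻¹‖)
      ≤ ∏ t ∈ Finset.range j, ((1 / c0) * (1 / ((r + sfun g (t + 1) : ℕ) : ℝ))) :=
    Finset.prod_le_prod (fun t _ => norm_nonneg _) h1
  have hcc : ‖cc lam m (r + sfun g j)‖ ≤ Am lam c0 m * cR m (r + sfun g j + 0) := by
    rw [Nat.add_zero]
    exact ncc_le hlam hc0 hc0b m _
  calc (∏ t ∈ Finset.range j, ‖(((r + sfun g (t + 1) : ℕ) : ℂ) - lam)⁻¹‖) * ‖cc lam m (r + sfun g j)‖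
      ≤ (∏ t ∈ Finset.range j, ((1 / c0) * (1 / ((r + sfun g (t + 1) : ℕ) : ℝ))))
          * (Am lam c0 m * cR m (r + sfun g j + 0)) := by
        apply mul_le_mul hprod hcc (norm_nonneg _)
        exact Finset.prod_nonneg (fun t _ => by positivity)
    _ = (Am lam c0 m / c0 ^ j)
          * ((∏ t ∈ Finset.range j, (1 / ((r + sfun g (t + 1) : ℕ) : ℝ))) * cR m (r + sfun g j + 0)) := by
        rw [Finset.prod_mul_distrib, Finset.prod_const]
        rw [show ((1:ℝ)/c0) ^ (Finset.range j).card = 1 / c0 ^ j by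
          rw [Finset.card_range, div_pow, one_pow]]
        ring

/-- pointwise norm bound via the shifted real system, for `m ≥ 2s+1` -/
lemma PP_le_tail (hlam : ∀ p : ℕ, 0 < p → lam ≠ (p : ℂ)) {c0 : ℝ} (hc0 : 0 < c0)
    (hc0b : ∀ n : ℕ, 1 ≤ n → c0 * n ≤ ‖((n : ℕ) : ℂ) - lam‖)
    {s : ℕ} (hsb : ‖lam‖ ≤ s) {m : ℕ} (hm : 2 * s + 1 ≤ m) (j r : ℕ) (g : Fin j → ℕ) :
    ‖PP lam m j r g‖ * (c0 ^ j * cR (m - 2 * s) s) ≤ QS (m - 2 * s) s j r g := by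
  unfold PP QS Praw
  rw [norm_mul, norm_prod]
  have h1 : ∀ t ∈ Finset.range j,
      ‖(((r + sfun g (t + 1) : ℕ) : ℂ) - lam)⁻¹‖
        ≤ (1 / c0) * (1 / ((r + sfun g (t + 1) : ℕ) : ℝ)) := by
    intro t _
    rw [norm_inv]
    have hv : 1 ≤ r + sfun g (t + 1) := by
      have := sfun_le j g (t + 1); omega
    have h2 := hc0b _ hv
    have h3 : (0:ℝ) < c0 * ((r + sfun g (t + 1) : ℕ) : ℝ) := by
      have : (0:ℝ) < ((r + sfun g (t + 1) : ℕ) : ℝ) := by exact_mod_cast hv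
      positivity
    refine (inv_anti₀ h3 h2).trans_eq ?_
    rw [mul_inv]
    ring
  have hprod : (∏ t ∈ Finset.range j, ‖(((r + sfun g (t + 1) : ℕ) : ℂ) - lam)⁻¹‖)
      ≤ ∏ t ∈ Finset.range j, ((1 / c0) * (1 / ((r + sfun g (t + 1) : ℕ) : ℝ))) :=
    Finset.prod_le_prod (fun t _ => norm_nonneg _) h1
  have hcc : ‖cc lam m (r + sfun g j)‖ * cR (m - 2 * s) s ≤ cR (m - 2 * s) (r + sfun g j + s) := by
    rw [show r + sfun g j + s = s + (r + sfun g j) by ring]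
    exact ncc_tail hlam hsb hm _
  have hA : (∏ t ∈ Finset.range j, ((1 / c0) * (1 / ((r + sfun g (t + 1) : ℕ) : ℝ))))
      = (1 / c0 ^ j) * ∏ t ∈ Finset.range j, (1 / ((r + sfun g (t + 1) : ℕ) : ℝ)) := by
    rw [Finset.prod_mul_distrib, Finset.prod_const, Finset.card_range, div_pow, one_pow]
  have hc0j : (0:ℝ) < c0 ^ j := by positivity
  have hQ : (0:ℝ) ≤ ∏ t ∈ Finset.range j, (1 / ((r + sfun g (t + 1) : ℕ) : ℝ)) :=
    Finset.prod_nonneg (fun t _ => by positivity)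
  set Pq := ∏ t ∈ Finset.range j, (1 / ((r + sfun g (t + 1) : ℕ) : ℝ)) with hPq
  set Cn := ‖cc lam m (r + sfun g j)‖ with hCn
  have h5 : (∏ t ∈ Finset.range j, ‖(((r + sfun g (t + 1) : ℕ) : ℂ) - lam)⁻¹‖)
      ≤ (1 / c0 ^ j) * Pq := hprod.trans_eq hA
  have h6 : (∏ t ∈ Finset.range j, ‖(((r + sfun g (t + 1) : ℕ) : ℂ) - lam)⁻¹‖) * Cn
        * (c0 ^ j * cR (m - 2 * s) s)
      ≤ ((1 / c0 ^ j) * Pq) * Cn * (c0 ^ j * cR (m - 2 * s) s) := by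
    apply mul_le_mul_of_nonneg_right
      (mul_le_mul_of_nonneg_right h5 (norm_nonneg _))
      (mul_nonneg hc0j.le (cR_pos _ _).le)
  have hcc0 : (1 / c0 ^ j) * c0 ^ j = 1 := one_div_mul_cancel (ne_of_gt hc0j)
  have h7 : ((1 / c0 ^ j) * Pq) * Cn * (c0 ^ j * cR (m - 2 * s) s)
      = Pq * (Cn * cR (m - 2 * s) s) := by
    calc ((1 / c0 ^ j) * Pq) * Cn * (c0 ^ j * cR (m - 2 * s) s)
        = ((1 / c0 ^ j) * c0 ^ j) * (Pq * (Cn * cR (m - 2 * s) s)) := by ring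
      _ = Pq * (Cn * cR (m - 2 * s) s) := by rw [hcc0, one_mul]
  refine (h6.trans_eq h7).trans ?_
  exact mul_le_mul_of_nonneg_left hcc hQ


lemma PP_summable (hlam : ∀ p : ℕ, 0 < p → lam ≠ (p : ℂ)) {c0 : ℝ} (hc0 : 0 < c0)
    (hc0b : ∀ n : ℕ, 1 ≤ n → c0 * n ≤ ‖((n : ℕ) : ℂ) - lam‖)
    {m : ℕ} (hm : 1 ≤ m) (j r : ℕ) :
    Summable (fun g => ‖PP lam m j r g‖) ∧ Summable (PP lam m j r) := by
  have hq := (QS_main m 0 hm j r).1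
  have hmaj : Summable (fun g => (Am lam c0 m / c0 ^ j) * QS m 0 j r g) := hq.mul_left _
  have h1 : Summable (fun g => ‖PP lam m j r g‖) :=
    Summable.of_nonneg_of_le (fun g => norm_nonneg _)
      (fun g => PP_le hlam hc0 hc0b m j r g) hmaj
  exact ⟨h1, h1.of_norm⟩

lemma PP_tsum (hlam : ∀ p : ℕ, 0 < p → lam ≠ (p : ℂ)) {c0 : ℝ} (hc0 : 0 < c0)
    (hc0b : ∀ n : ℕ, 1 ≤ n → c0 * n ≤ ‖((n : ℕ) : ℂ) - lam‖)
    {m : ℕ} (hm : 1 ≤ m) (j : ℕ) :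
    ∀ r, ∑' g, PP lam m j r g = cc lam m r / (m : ℂ) ^ j := by
  induction j with
  | zero =>
    intro r
    haveI : Unique (Fin 0 → ℕ) := ⟨⟨fun i => i.elim0⟩, fun g => funext fun i => i.elim0⟩
    rw [tsum_eq_single default (fun b hb => absurd (Subsingleton.elim b default) hb)]
    unfold PP Praw
    simp
  | succ j ih =>
    intro r
    set e := (Fin.consEquiv (fun _ : Fin (j + 1) => ℕ)).symm with he
    have hsum := (PP_summable hlam hc0 hc0b hm (j + 1) r).2
    have hF : Summable (fun p : ℕ × (Fin j → ℕ) => PP lam m (j + 1) r (e.symm p)) := by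
      rw [show (fun p : ℕ × (Fin j → ℕ) => PP lam m (j + 1) r (e.symm p))
          = (PP lam m (j + 1) r) ∘ e.symm from rfl]
      rw [Equiv.summable_iff e.symm]
      exact hsum
    have hcomp : ∀ (b : ℕ) (t : Fin j → ℕ), PP lam m (j + 1) r (e.symm (b, t))
        = (((r + b + 1 : ℕ) : ℂ) - lam)⁻¹ * PP lam m j (r + b + 1) t := by
      intro b t
      have h1 : e.symm (b, t) = Fin.cons b t := by simp [he]; rfl
      rw [h1, PP_succ]
      simp only [Fin.cons_zero, Fin.tail_cons]
    have hslice : ∀ b : ℕ, Summable (fun t => PP lam m (j + 1) r (e.symm (b, t))) := by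
      intro b
      exact (((PP_summable hlam hc0 hc0b hm j (r + b + 1)).2).mul_left
        ((((r + b + 1 : ℕ) : ℂ) - lam)⁻¹)).congr (fun t => (hcomp b t).symm)
    calc ∑' g, PP lam m (j + 1) r g
        = ∑' p : ℕ × (Fin j → ℕ), PP lam m (j + 1) r (e.symm p) := (Equiv.tsum_eq e.symm _).symm
      _ = ∑' b, ∑' t, PP lam m (j + 1) r (e.symm (b, t)) := Summable.tsum_prod' hF hslice
      _ = ∑' b, (((r + b + 1 : ℕ) : ℂ) - lam)⁻¹ * (cc lam m (r + b + 1) / (m : ℂ) ^ j) := by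
          apply tsum_congr
          intro b
          rw [tsum_congr (hcomp b), tsum_mul_left, ih (r + b + 1)]
      _ = (1 / (m : ℂ) ^ j) * ∑' b, (((r + b + 1 : ℕ) : ℂ) - lam)⁻¹ * cc lam m (r + b + 1) := by
          rw [← tsum_mul_left]
          apply tsum_congr
          intro b
          ring
      _ = (1 / (m : ℂ) ^ j) * (cc lam m r / m) := by
          rw [(hasSum_cc hlam hc0 hc0b hm r).tsum_eq]
      _ = cc lam m r / (m : ℂ) ^ (j + 1) := by
          rw [pow_succ]
          ring


lemma exists_c0 (hlam : ∀ p : ℕ, 0 < p → lam ≠ (p : ℂ)) :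
    ∃ c0 : ℝ, 0 < c0 ∧ ∀ n : ℕ, 1 ≤ n → c0 * n ≤ ‖((n : ℕ) : ℂ) - lam‖ := by
  set K := ⌈‖lam‖⌉₊ with hK
  set N := 2 * K + 1 with hN
  have hSne : (Finset.Icc 1 N).Nonempty := ⟨1, by simp [hN]⟩
  set c1 := (Finset.Icc 1 N).inf' hSne (fun n => ‖((n : ℕ) : ℂ) - lam‖ / n) with hc1
  have hc1pos : 0 < c1 := by
    rw [hc1, Finset.lt_inf'_iff]
    intro n hn
    have hn1 : 1 ≤ n := (Finset.mem_Icc.mp hn).1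
    have hne : ((n : ℕ) : ℂ) - lam ≠ 0 := fact_ne hlam hn1
    have : (0:ℝ) < ‖((n : ℕ) : ℂ) - lam‖ := norm_pos_iff.mpr hne
    have hnp : (0:ℝ) < n := by exact_mod_cast hn1
    positivity
  refine ⟨min (1/2) c1, lt_min (by norm_num) hc1pos, ?_⟩
  intro n hn1
  by_cases hcase : n ≤ N
  · have hmem : n ∈ Finset.Icc 1 N := Finset.mem_Icc.mpr ⟨hn1, hcase⟩
    have h2 : c1 ≤ ‖((n : ℕ) : ℂ) - lam‖ / n := Finset.inf'_le _ hmem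
    have hnp : (0:ℝ) < n := by exact_mod_cast hn1
    have h3 : min (1/2) c1 ≤ ‖((n : ℕ) : ℂ) - lam‖ / n := le_trans (min_le_right _ _) h2
    calc min (1/2) c1 * n ≤ (‖((n : ℕ) : ℂ) - lam‖ / n) * n :=
          mul_le_mul_of_nonneg_right h3 hnp.le
      _ = ‖((n : ℕ) : ℂ) - lam‖ := by field_simp
  · have hKn : ‖lam‖ ≤ K := Nat.le_ceil _
    have hnN : (N : ℝ) < n := by exact_mod_cast by omega
    have h4 : (n : ℝ) - ‖lam‖ ≤ ‖((n : ℕ) : ℂ) - lam‖ := by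
      refine le_trans ?_ (norm_sub_norm_le _ _)
      rw [Complex.norm_natCast]
    have hNval : (N : ℝ) = 2 * K + 1 := by rw [hN]; push_cast; ring
    calc min (1/2) c1 * n ≤ (1/2) * n := by
          apply mul_le_mul_of_nonneg_right (min_le_left _ _) (by positivity)
      _ ≤ (n : ℝ) - ‖lam‖ := by
          rw [hNval] at hnN
          linarith
      _ ≤ ‖((n : ℕ) : ℂ) - lam‖ := h4

/-! ### The equivalence with `DecTuple` -/

def tupOf (k : ℕ) (g : Fin k → ℕ) : ℕ → ℕ := fun i => if i < k then sfun g (k - i) else 0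

lemma tupOf_mem (k : ℕ) (g : Fin k → ℕ) : tupOf k g ∈ DecTuple k := by
  refine ⟨?_, ?_, ?_⟩
  · intro j hj
    unfold tupOf
    rw [if_pos (by omega), if_pos (by omega)]
    exact sfun_lt g (by omega)
  · intro j hj
    unfold tupOf
    rw [if_pos hj]
    have := sfun_le k g (k - j)
    omega
  · intro j hj
    unfold tupOf
    rw [if_neg (by omega)]

def dtEquiv (k : ℕ) : (Fin k → ℕ) ≃ DecTuple k where
  toFun g := ⟨tupOf k g, tupOf_mem k g⟩
  invFun x := fun u => x.1 (k - 1 - u.val) - x.1 (k - u.val) - 1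
  left_inv := by
    intro g
    funext u
    have hu : u.val < k := u.isLt
    have h1 : tupOf k g (k - 1 - u.val) = sfun g (u.val + 1) := by
      unfold tupOf
      rw [if_pos (by omega)]
      congr 1
      omega
    have h2 : tupOf k g (k - u.val) = sfun g u.val := by
      by_cases h0 : u.val = 0
      · unfold tupOf
        rw [h0]
        rw [if_neg (by omega)]
        simp
      · unfold tupOf
        rw [if_pos (by omega)]
        congr 1
        omega
    show tupOf k g (k - 1 - u.val) - tupOf k g (k - u.val) - 1 = g u
    rw [h1, h2, sfun_succ]
    have h3 : gext g u.val = g u := by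
      unfold gext
      rw [dif_pos hu]
    omega
  right_inv := by
    intro x
    obtain ⟨x, hx1, hx2, hx3⟩ := x
    apply Subtype.ext
    show tupOf k _ = x
    set gi : Fin k → ℕ := fun u => x (k - 1 - u.val) - x (k - u.val) - 1 with hgi
    have key : ∀ t, t ≤ k → sfun gi t = x (k - t) := by
      intro t
      induction t with
      | zero =>
        intro _
        rw [sfun_zero, Nat.sub_zero, hx3 k le_rfl]
      | succ t iht =>
        intro ht
        rw [sfun_succ, iht (by omega)]
        have hg : gext gi t = x (k - 1 - t) - x (k - t) - 1 := by
          unfold gext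
          rw [dif_pos (by omega : t < k)]
        rw [hg, show k - (t + 1) = k - 1 - t by omega]
        have hstep : x (k - t) + 1 ≤ x (k - 1 - t) := by
          by_cases h0 : t = 0
          · subst h0
            simp only [Nat.sub_zero]
            rw [hx3 k le_rfl]
            have := hx2 (k - 1) (by omega)
            omega
          · have := hx1 (k - 1 - t) (by omega)
            rw [show k - 1 - t + 1 = k - t by omega] at this
            omega
        omega
    funext i
    by_cases hi : i < k
    · unfold tupOf
      rw [if_pos hi, key (k - i) (by omega), show k - (k - i) = i by omega]
    · unfold tupOf
      rw [if_neg hi, hx3 i (by omega)]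

end ReducedOhno

open ReducedOhno in
/-- **The reduced Ohno relation `F(k;λ) = G(k;λ)` in depth one** (the generating-function
form of the sum formula of depth `k`):
`Σ_{m≥1} 1/(m^k (m-λ)) = Σ_{m₁>⋯>m_k≥1} 1/(m₁(m₁-λ)⋯(m_k-λ))`. -/
theorem reduced_ohno_depth_one (k : ℕ) (hk : 1 ≤ k)
    (lam : ℂ) (hlam : ∀ p : ℕ, 0 < p → lam ≠ (p : ℂ)) :
    ∑' m : ℕ, (((m + 1 : ℕ) : ℂ) ^ k * (((m + 1 : ℕ) : ℂ) - lam))⁻¹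
      = ∑' m : DecTuple k,
          ((m.1 0 : ℂ))⁻¹ * ∏ i ∈ Finset.range k, ((m.1 i : ℂ) - lam)⁻¹ := by
  classical
  obtain ⟨c0, hc0, hc0b⟩ := exists_c0 hlam
  set s : ℕ := ⌈‖lam‖⌉₊ + 1 with hs
  have hsb : ‖lam‖ ≤ (s : ℝ) := by
    rw [hs]; push_cast; linarith [Nat.le_ceil ‖lam‖]
  set F : ℕ × (Fin k → ℕ) → ℂ :=
    fun p => (((p.1 + 1 : ℕ) : ℂ) - lam)⁻¹ * PP lam (p.1 + 1) k 0 p.2 with hF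
  -- (a) slice norm summability
  have hsliceN : ∀ b : ℕ, Summable (fun g => ‖F (b, g)‖) := by
    intro b
    have h1 := (PP_summable hlam hc0 hc0b (by omega : 1 ≤ b + 1) k 0).1
    refine (h1.mul_left ‖(((b + 1 : ℕ) : ℂ) - lam)⁻¹‖).congr (fun g => ?_)
    simp only [hF, norm_mul]
  -- (b) summability of slice sums
  have htb : Summable (fun b => ∑' g, ‖F (b, g)‖) := by
    rw [← summable_nat_add_iff (2 * s + 1)]
    have hmaj : Summable (fun b : ℕ => ((s : ℝ) + 1) ^ k / c0 ^ (k + 1) * (1 / ((b : ℝ) + 1) ^ 2)) := by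
      apply Summable.mul_left
      have hbase : Summable (fun n : ℕ => 1 / ((n : ℝ)) ^ 2) := by
        simpa using Real.summable_one_div_nat_pow.mpr (by omega : 1 < 2)
      have := (summable_nat_add_iff (f := fun n : ℕ => 1 / ((n : ℝ)) ^ 2) 1).mpr hbase
      refine this.congr (fun b => ?_)
      push_cast
      ring
    apply Summable.of_nonneg_of_le (fun b => tsum_nonneg fun g => norm_nonneg _) ?_ hmaj
    intro b
    set m := b + (2 * s + 1) + 1 with hm
    have hm2s : 2 * s + 1 ≤ m := by omega
    have hM1 : 1 ≤ m - 2 * s := by omega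
    have hmb2 : m - 2 * s = b + 2 := by omega
    have e1 : ∑' g, ‖F (b + (2 * s + 1), g)‖
        = ‖(((m : ℕ) : ℂ) - lam)⁻¹‖ * ∑' g, ‖PP lam m k 0 g‖ := by
      rw [← tsum_mul_left]
      apply tsum_congr
      intro g
      simp only [hF, norm_mul, hm]
    rw [e1]
    have hPPsum := (PP_summable hlam hc0 hc0b (show 1 ≤ m by omega) k 0).1
    have hQS := QS_main (m - 2 * s) s hM1 k 0
    have hpt : ∀ g, ‖PP lam m k 0 g‖
        ≤ (1 / (c0 ^ k * cR (m - 2 * s) s)) * QS (m - 2 * s) s k 0 g := by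
      intro g
      have h2 := PP_le_tail hlam hc0 hc0b hsb hm2s k 0 g
      have hpos : (0:ℝ) < c0 ^ k * cR (m - 2 * s) s := mul_pos (pow_pos hc0 k) (cR_pos _ _)
      rw [one_div, inv_mul_eq_div]
      exact (le_div_iff₀ hpos).mpr h2
    have hTm : ∑' g, ‖PP lam m k 0 g‖
        ≤ (1 / (c0 ^ k * cR (m - 2 * s) s))
            * (((s : ℝ) + 1) ^ k * cR (m - 2 * s) (0 + s) / ((m - 2 * s : ℕ) : ℝ) ^ k) := by
      refine (Summable.tsum_le_tsum hpt hPPsum (hQS.1.mul_left _)).trans ?_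
      rw [tsum_mul_left]
      apply mul_le_mul_of_nonneg_left hQS.2
        (div_nonneg zero_le_one (mul_pos (pow_pos hc0 k) (cR_pos _ _)).le)
    have hTm2 : ∑' g, ‖PP lam m k 0 g‖ ≤ ((s : ℝ) + 1) ^ k / (c0 ^ k * ((b : ℝ) + 2) ^ k) := by
      refine hTm.trans_eq ?_
      rw [hmb2, Nat.zero_add]
      have hcRne : cR (b + 2) s ≠ 0 := (cR_pos _ _).ne'
      have hcast : ((b + 2 : ℕ) : ℝ) = (b : ℝ) + 2 := by push_cast; ring
      rw [hcast]
      field_simp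
    have hmpos : (0:ℝ) < ((m : ℕ) : ℝ) := by
      exact_mod_cast (show 0 < m by omega)
    have hinv : ‖(((m : ℕ) : ℂ) - lam)⁻¹‖ ≤ 1 / (c0 * m) := by
      rw [norm_inv, one_div]
      exact inv_anti₀ (by positivity) (hc0b m (by omega))
    have hTnonneg : (0:ℝ) ≤ ∑' g, ‖PP lam m k 0 g‖ := tsum_nonneg fun g => norm_nonneg _
    calc ‖(((m : ℕ) : ℂ) - lam)⁻¹‖ * ∑' g, ‖PP lam m k 0 g‖
        ≤ (1 / (c0 * m)) * (((s : ℝ) + 1) ^ k / (c0 ^ k * ((b : ℝ) + 2) ^ k)) := by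
          apply mul_le_mul hinv hTm2 hTnonneg
            (div_nonneg zero_le_one (mul_nonneg hc0.le (Nat.cast_nonneg m)))
      _ ≤ ((s : ℝ) + 1) ^ k / c0 ^ (k + 1) * (1 / ((b : ℝ) + 1) ^ 2) := by
          have hbm : ((b : ℝ) + 1) ≤ ((m : ℕ) : ℝ) := by
            rw [hm]; push_cast; linarith [Nat.cast_nonneg (α := ℝ) s]
          have hbk : ((b : ℝ) + 1) ≤ ((b : ℝ) + 2) ^ k := by
            calc ((b : ℝ) + 1) ≤ (b : ℝ) + 2 := by linarith
              _ = ((b : ℝ) + 2) ^ 1 := (pow_one _).symm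
              _ ≤ ((b : ℝ) + 2) ^ k := pow_le_pow_right₀ (by linarith [Nat.cast_nonneg (α := ℝ) b]) hk
          have hD2 : (0:ℝ) < ((b:ℝ) + 1) ^ 2 * c0 ^ (k + 1) := by positivity
          have hsq : ((b:ℝ) + 1) ^ 2 ≤ ((b:ℝ) + 2) ^ k * ((m : ℕ) : ℝ) := by
            rw [sq]
            exact mul_le_mul hbk hbm (by positivity) (by positivity)
          have hkey : ((b:ℝ) + 1) ^ 2 * c0 ^ (k + 1) ≤ c0 ^ k * ((b:ℝ) + 2) ^ k * (c0 * ↑m) := by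
            calc ((b:ℝ) + 1) ^ 2 * c0 ^ (k + 1)
                ≤ (((b:ℝ) + 2) ^ k * ((m : ℕ) : ℝ)) * c0 ^ (k + 1) :=
                  mul_le_mul_of_nonneg_right hsq (by positivity)
              _ = c0 ^ k * ((b:ℝ) + 2) ^ k * (c0 * ↑m) := by rw [pow_succ]; ring
          have e2 : ((s:ℝ) + 1) ^ k / (c0 ^ k * ((b:ℝ) + 2) ^ k) / (c0 * ↑m)
              = ((s:ℝ) + 1) ^ k / (c0 ^ k * ((b:ℝ) + 2) ^ k * (c0 * ↑m)) := div_div _ _ _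
          have e3 : ((s:ℝ) + 1) ^ k / c0 ^ (k + 1) * (1 / ((b:ℝ) + 1) ^ 2)
              = ((s:ℝ) + 1) ^ k / (((b:ℝ) + 1) ^ 2 * c0 ^ (k + 1)) := by
            rw [div_mul_eq_mul_div, mul_one_div, div_div]
          rw [show (1 / (c0 * ↑m)) * (((s : ℝ) + 1) ^ k / (c0 ^ k * ((b : ℝ) + 2) ^ k))
              = ((s:ℝ) + 1) ^ k / (c0 ^ k * ((b:ℝ) + 2) ^ k) / (c0 * ↑m) by
            rw [div_div]
            ring]
          rw [e2, e3]
          exact div_le_div_of_nonneg_left (by positivity) hD2 hkey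
  -- (c) full summability
  have hFnorm : Summable (fun p => ‖F p‖) :=
    (summable_prod_of_nonneg (fun p => norm_nonneg (F p))).mpr ⟨hsliceN, htb⟩
  have hFsum : Summable F := hFnorm.of_norm
  -- (d1) first iterated sum = LHS of the goal
  have hLHS : ∑' p, F p
      = ∑' b : ℕ, (((b + 1 : ℕ) : ℂ) ^ k * (((b + 1 : ℕ) : ℂ) - lam))⁻¹ := by
    rw [Summable.tsum_prod' hFsum (fun b => (hsliceN b).of_norm)]
    apply tsum_congr
    intro b
    have h1 : ∑' g, F (b, g)
        = (((b + 1 : ℕ) : ℂ) - lam)⁻¹ * ∑' g, PP lam (b + 1) k 0 g := by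
      simp only [hF]
      exact tsum_mul_left
    rw [h1, PP_tsum hlam hc0 hc0b (by omega : 1 ≤ b + 1) k 0,
      cc_zero_right hlam (b + 1), mul_inv_rev]
    push_cast
    ring
  -- (d2) second iterated sum = RHS of the goal
  have hbsum : ∀ g : Fin k → ℕ, Summable (fun b => F (b, g)) := by
    intro g
    have hV : 1 ≤ sfun g k := le_trans hk (sfun_le k g k)
    have h3 := (hasSum_cc hlam hc0 hc0b hV 0).summable.mul_left (Praw lam k 0 g)
    refine h3.congr (fun b => ?_)
    simp only [hF]
    unfold PP
    rw [Nat.zero_add, Nat.zero_add, cc_comm]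
    ring
  have hRHS : ∑' p, F p
      = ∑' g : Fin k → ℕ, ((sfun g k : ℂ))⁻¹ * Praw lam k 0 g := by
    have hcomm := Summable.tsum_comm' (f := fun b g => F (b, g)) hFsum
      (fun b => (hsliceN b).of_norm) hbsum
    rw [Summable.tsum_prod' hFsum (fun b => (hsliceN b).of_norm), ← hcomm]
    apply tsum_congr
    intro g
    have hV : 1 ≤ sfun g k := le_trans hk (sfun_le k g k)
    have h4 := (hasSum_cc hlam hc0 hc0b hV 0).tsum_eq
    have h5 : ∑' b, F (b, g)
        = Praw lam k 0 g * ∑' b, (((0 + b + 1 : ℕ) : ℂ) - lam)⁻¹ * cc lam (sfun g k) (0 + b + 1) := by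
      rw [← tsum_mul_left]
      apply tsum_congr
      intro b
      simp only [hF]
      unfold PP
      rw [Nat.zero_add, Nat.zero_add, cc_comm]
      ring
    rw [h5, h4, cc_zero_right hlam]
    rw [one_div]
    ring
  -- (e) identify with the DecTuple sum
  have hEq : ∑' g : Fin k → ℕ, ((sfun g k : ℂ))⁻¹ * Praw lam k 0 g
      = ∑' m : DecTuple k,
          ((m.1 0 : ℂ))⁻¹ * ∏ i ∈ Finset.range k, ((m.1 i : ℂ) - lam)⁻¹ := by
    rw [← (dtEquiv k).tsum_eq (fun x : DecTuple k =>
      ((x.1 0 : ℂ))⁻¹ * ∏ i ∈ Finset.range k, ((x.1 i : ℂ) - lam)⁻¹)]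
    apply tsum_congr
    intro g
    have h0 : (dtEquiv k g).1 0 = sfun g k := by
      show tupOf k g 0 = sfun g k
      unfold tupOf
      rw [if_pos (by omega)]
      congr 1
    have hprod : ∏ i ∈ Finset.range k, (((dtEquiv k g).1 i : ℂ) - lam)⁻¹ = Praw lam k 0 g := by
      have h6 : ∀ i ∈ Finset.range k,
          (((dtEquiv k g).1 i : ℂ) - lam)⁻¹
            = (((sfun g ((k - 1 - i) + 1) : ℕ) : ℂ) - lam)⁻¹ := by
        intro i hi
        have hik : i < k := Finset.mem_range.mp hi
        show (((tupOf k g i : ℕ) : ℂ) - lam)⁻¹ = _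
        unfold tupOf
        rw [if_pos hik, show k - i = (k - 1 - i) + 1 by omega]
      rw [Finset.prod_congr rfl h6]
      rw [Finset.prod_range_reflect (fun t => (((sfun g (t + 1) : ℕ) : ℂ) - lam)⁻¹) k]
      unfold Praw
      apply Finset.prod_congr rfl
      intro t _
      rw [Nat.zero_add]
    rw [h0, hprod]
  rw [← hLHS, hRHS, hEq]
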